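/- Let K = [0, 1] × [0, 1] ⊆ ℝ² be the unit square. Then the skeleton of K equals the union of the two open diagonals: S_K = {(x, x) : 0 < x < 1} ∪ {(x, 1 − x) : 0 < x < 1}. That is, a point z ∈ ℝ² has a non-unique nearest point on ∂K (with respect to the Euclidean distance) if and only if z lies on one of the two open diagonals of the square. -/

import Mathlib

open Metric

noncomputable section SqSkelAux
open Set

private abbrev E2 := EuclideanSpace ℝ (Fin 2)

private def Ksq : Set E2 := {z | z 0 ∈ Set.Icc (0 : ℝ) 1 ∧ z 1 ∈ Set.Icc (0 : ℝ) 1}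

private def pt (a b : ℝ) : E2 := (WithLp.equiv 2 (Fin 2 → ℝ)).symm ![a, b]

@[simp] private lemma pt_apply0 (a b : ℝ) : pt a b 0 = a := rfl
@[simp] private lemma pt_apply1 (a b : ℝ) : pt a b 1 = b := rfl

private lemma dist_eq2 (x y : E2) :
    dist x y = Real.sqrt ((x 0 - y 0) ^ 2 + (x 1 - y 1) ^ 2) := by
  rw [EuclideanSpace.dist_eq, Fin.sum_univ_two]
  simp [Real.dist_eq, sq_abs]

private lemma contin0 : Continuous fun z : E2 => z 0 :=
  (EuclideanSpace.proj (0 : Fin 2) : E2 →L[ℝ] ℝ).continuous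

private lemma contin1 : Continuous fun z : E2 => z 1 :=
  (EuclideanSpace.proj (1 : Fin 2) : E2 →L[ℝ] ℝ).continuous

private lemma isClosed_Ksq : IsClosed Ksq :=
  (isClosed_Icc.preimage contin0).inter (isClosed_Icc.preimage contin1)

private lemma interior_Ksq :
    interior Ksq = {z : E2 | z 0 ∈ Set.Ioo (0 : ℝ) 1 ∧ z 1 ∈ Set.Ioo (0 : ℝ) 1} := by
  apply Subset.antisymm
  · intro z hz
    obtain ⟨ε, hε, hball⟩ := Metric.isOpen_iff.1 isOpen_interior z hz
    have key : ∀ (i : Fin 2) (c : ℝ), |c| < ε → z i + c ∈ Set.Icc (0 : ℝ) 1 := by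
      intro i c hc
      have hmem : z + EuclideanSpace.single i c ∈ Ksq := by
        apply interior_subset (hball ?_)
        rw [mem_ball]
        have : dist (z + EuclideanSpace.single i c) z = ‖EuclideanSpace.single i c‖ := by
          simp [dist_eq_norm]
        rw [this, EuclideanSpace.norm_single]
        simpa using hc
      have happ : ∀ j : Fin 2, (z + EuclideanSpace.single i c) j
          = z j + (if j = i then c else 0) := by
        intro j
        rw [PiLp.add_apply, EuclideanSpace.single_apply]
      rcases hmem with ⟨h0, h1⟩
      fin_cases i
      · rw [happ 0] at h0; simpa using h0
      · rw [happ 1] at h1; simpa using h1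
    have hε2 : |ε / 2| < ε := by rw [abs_of_pos (by linarith)]; linarith
    have hε2' : |(-(ε / 2))| < ε := by rw [abs_neg]; exact hε2
    have k0p := key 0 (ε / 2) hε2
    have k0m := key 0 (-(ε / 2)) hε2'
    have k1p := key 1 (ε / 2) hε2
    have k1m := key 1 (-(ε / 2)) hε2'
    simp only [Set.mem_Icc] at k0p k0m k1p k1m
    exact ⟨⟨by linarith [k0m.1], by linarith [k0p.2]⟩, ⟨by linarith [k1m.1], by linarith [k1p.2]⟩⟩
  · apply interior_maximal
    · intro w hw
      exact ⟨⟨hw.1.1.le, hw.1.2.le⟩, ⟨hw.2.1.le, hw.2.2.le⟩⟩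
    · exact (isOpen_Ioo.preimage contin0).inter (isOpen_Ioo.preimage contin1)

private lemma frontier_Ksq :
    frontier Ksq = {z : E2 | (z 0 ∈ Set.Icc (0 : ℝ) 1 ∧ z 1 ∈ Set.Icc (0 : ℝ) 1) ∧
      (z 0 = 0 ∨ z 0 = 1 ∨ z 1 = 0 ∨ z 1 = 1)} := by
  rw [frontier, isClosed_Ksq.closure_eq, interior_Ksq]
  ext z
  simp only [Set.mem_diff, Set.mem_setOf_eq, Set.mem_Icc, Set.mem_Ioo, Ksq]
  constructor
  · rintro ⟨⟨h0, h1⟩, hni⟩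
    refine ⟨⟨h0, h1⟩, ?_⟩
    by_contra hc
    push_neg at hc
    obtain ⟨c1, c2, c3, c4⟩ := hc
    exact hni ⟨⟨lt_of_le_of_ne h0.1 (Ne.symm c1), lt_of_le_of_ne h0.2 c2⟩,
      ⟨lt_of_le_of_ne h1.1 (Ne.symm c3), lt_of_le_of_ne h1.2 c4⟩⟩
  · rintro ⟨⟨h0, h1⟩, hor⟩
    refine ⟨⟨h0, h1⟩, ?_⟩
    rintro ⟨⟨g1, g2⟩, ⟨g3, g4⟩⟩
    rcases hor with h | h | h | h <;> linarith

private lemma convex_Ksq : Convex ℝ Ksq := by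
  intro x hx y hy a b ha hb hab
  constructor
  · have := (convex_Icc (0:ℝ) 1) hx.1 hy.1 ha hb hab
    simpa [PiLp.add_apply, PiLp.smul_apply, smul_eq_mul] using this
  · have := (convex_Icc (0:ℝ) 1) hx.2 hy.2 ha hb hab
    simpa [PiLp.add_apply, PiLp.smul_apply, smul_eq_mul] using this

private lemma dist_mid_lt (z x x' : E2) (d : ℝ) (hne : x ≠ x')
    (hx : dist z x = d) (hx' : dist z x' = d) :
    dist z ((1/2 : ℝ) • x + (1/2 : ℝ) • x') < d := by
  have hd0 : 0 < d := by
    rcases (dist_nonneg.trans_eq hx).lt_or_eq with h | h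
    · exact h
    · exact absurd ((dist_eq_zero.1 (hx.trans h.symm)).symm.trans
        (dist_eq_zero.1 (hx'.trans h.symm))) hne
  set u := z - x with hu
  set v := z - x' with hv
  have hzm : z - ((1/2 : ℝ) • x + (1/2 : ℝ) • x') = (1/2 : ℝ) • (u + v) := by
    rw [hu, hv]; module
  have huv : u - v = x' - x := by rw [hu, hv]; module
  have hnu : ‖u‖ = d := by rw [hu, ← dist_eq_norm]; exact hx
  have hnv : ‖v‖ = d := by rw [hv, ← dist_eq_norm]; exact hx'
  have hpos : 0 < ‖u - v‖ := by
    rw [huv, norm_pos_iff, sub_ne_zero]; exact fun h => hne h.symm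
  have hpar := parallelogram_law_with_norm ℝ u v
  have hlt : ‖u + v‖ ^ 2 < (2 * d) ^ 2 := by nlinarith
  have h2 : ‖u + v‖ < 2 * d := lt_of_pow_lt_pow_left₀ 2 (by linarith) hlt
  rw [dist_eq_norm, hzm, norm_smul, Real.norm_eq_abs,
    abs_of_pos (by norm_num : (0:ℝ) < 1/2)]
  linarith

/-- crossing the frontier along a segment -/
private lemma exists_frontier_near (z y : E2) (hz : z ∉ Ksq) (hy : y ∈ Ksq) :
    ∃ w ∈ frontier Ksq, dist z w ≤ dist z y := by
  set g0 : ℝ → ℝ := fun s => z 0 + s * (y 0 - z 0) with hg0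
  set g1 : ℝ → ℝ := fun s => z 1 + s * (y 1 - z 1) with hg1
  set f : ℝ → ℝ := fun s => max (max (-(g0 s)) (g0 s - 1)) (max (-(g1 s)) (g1 s - 1)) with hf
  have hc0 : Continuous g0 := by fun_prop
  have hc1 : Continuous g1 := by fun_prop
  have hcf : Continuous f := by
    apply Continuous.max <;> apply Continuous.max <;> fun_prop
  have hf1 : f 1 ≤ 0 := by
    have e0 : g0 1 = y 0 := by simp [hg0]
    have e1 : g1 1 = y 1 := by simp [hg1]
    rcases hy with ⟨⟨a1, a2⟩, ⟨b1, b2⟩⟩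
    simp only [hf, e0, e1, max_le_iff]
    constructor <;> constructor <;> linarith
  have hf0 : 0 < f 0 := by
    have e0 : g0 0 = z 0 := by simp [hg0]
    have e1 : g1 0 = z 1 := by simp [hg1]
    simp only [Ksq, Set.mem_setOf_eq, Set.mem_Icc, not_and_or, not_and, not_le] at hz
    simp only [hf, e0, e1, lt_max_iff]
    rcases hz with h | h
    · by_cases h0 : (0:ℝ) ≤ z 0
      · rcases h with h | h
        · linarith
        · left; right; linarith
      · left; left; push_neg at h0; linarith
    · by_cases h0 : (0:ℝ) ≤ z 1
      · rcases h with h | h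
        · linarith
        · right; right; linarith
      · right; left; push_neg at h0; linarith
  have hIVT : (0 : ℝ) ∈ f '' Set.Icc 0 1 := by
    apply intermediate_value_Icc' (by norm_num : (0:ℝ) ≤ 1) hcf.continuousOn
    exact ⟨hf1, hf0.le⟩
  obtain ⟨s, hs, hfs⟩ := hIVT
  have hfs' : max (max (-(g0 s)) (g0 s - 1)) (max (-(g1 s)) (g1 s - 1)) = 0 := hfs
  have b1 : -(g0 s) ≤ 0 := by
    calc -(g0 s) ≤ max (-(g0 s)) (g0 s - 1) := le_max_left _ _
    _ ≤ _ := le_max_left _ _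
    _ = 0 := hfs'
  have b2 : g0 s - 1 ≤ 0 := by
    calc g0 s - 1 ≤ max (-(g0 s)) (g0 s - 1) := le_max_right _ _
    _ ≤ _ := le_max_left _ _
    _ = 0 := hfs'
  have b3 : -(g1 s) ≤ 0 := by
    calc -(g1 s) ≤ max (-(g1 s)) (g1 s - 1) := le_max_left _ _
    _ ≤ _ := le_max_right _ _
    _ = 0 := hfs'
  have b4 : g1 s - 1 ≤ 0 := by
    calc g1 s - 1 ≤ max (-(g1 s)) (g1 s - 1) := le_max_right _ _
    _ ≤ _ := le_max_right _ _
    _ = 0 := hfs'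
  have h4 : g0 s = 0 ∨ g0 s = 1 ∨ g1 s = 0 ∨ g1 s = 1 := by
    rcases max_choice (max (-(g0 s)) (g0 s - 1)) (max (-(g1 s)) (g1 s - 1)) with h | h <;>
      rw [h] at hfs'
    · rcases max_choice (-(g0 s)) (g0 s - 1) with h' | h' <;> rw [h'] at hfs'
      · left; linarith
      · right; left; linarith
    · rcases max_choice (-(g1 s)) (g1 s - 1) with h' | h' <;> rw [h'] at hfs'
      · right; right; left; linarith
      · right; right; right; linarith
  refine ⟨pt (g0 s) (g1 s), ?_, ?_⟩
  · rw [frontier_Ksq]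
    simp only [Set.mem_setOf_eq, pt_apply0, pt_apply1, Set.mem_Icc]
    exact ⟨⟨⟨by linarith, by linarith⟩, ⟨by linarith, by linarith⟩⟩, h4⟩
  · rw [dist_eq2, dist_eq2 z y]
    simp only [pt_apply0, pt_apply1]
    have e : (z 0 - g0 s) ^ 2 + (z 1 - g1 s) ^ 2
        = s ^ 2 * ((z 0 - y 0) ^ 2 + (z 1 - y 1) ^ 2) := by
      simp only [hg0, hg1]; ring
    rw [e, Real.sqrt_mul (sq_nonneg s), Real.sqrt_sq_eq_abs, abs_of_nonneg hs.1]
    have := Real.sqrt_nonneg ((z 0 - y 0) ^ 2 + (z 1 - y 1) ^ 2)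
    nlinarith [hs.2]

private lemma abs_le_sqrt_left (a b : ℝ) : |a| ≤ Real.sqrt (a ^ 2 + b ^ 2) := by
  rw [← Real.sqrt_sq_eq_abs]
  exact Real.sqrt_le_sqrt (by nlinarith [sq_nonneg b])
private lemma coord0_le_dist (x y : E2) : |x 0 - y 0| ≤ dist x y := by
  rw [dist_eq2]; exact abs_le_sqrt_left _ _
private lemma coord1_le_dist (x y : E2) : |x 1 - y 1| ≤ dist x y := by
  rw [dist_eq2, add_comm]; exact abs_le_sqrt_left _ _
private lemma frontier_Ksq_subset : frontier Ksq ⊆ Ksq := by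
  intro w hw
  have := frontier_subset_closure hw
  rwa [isClosed_Ksq.closure_eq] at this

/-- no skeleton point outside the open square -/
private lemma no_skel_outside (z x x' : E2) (hz : z ∉ interior Ksq)
    (hx : x ∈ frontier Ksq) (hx' : x' ∈ frontier Ksq) (hne : x ≠ x')
    (hdx : dist z x = infDist z (frontier Ksq)) (hdx' : dist z x' = infDist z (frontier Ksq)) :
    False := by
  set d := infDist z (frontier Ksq) with hd
  by_cases hzK : z ∈ Ksq
  · -- z on frontier: unique nearest point z itself
    have hzf : z ∈ frontier Ksq := by
      rw [frontier, isClosed_Ksq.closure_eq]; exact ⟨hzK, hz⟩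
    have hd0 : d = 0 := by rw [hd, infDist_zero_of_mem hzf]
    have h1 : z = x := dist_eq_zero.1 (hdx.trans hd0)
    have h2 : z = x' := dist_eq_zero.1 (hdx'.trans hd0)
    exact hne (h1 ▸ h2)
  · -- z outside: unique metric projection
    have hKd : d ≤ infDist z Ksq := by
      by_contra hcon
      push_neg at hcon
      obtain ⟨y, hy, hdy⟩ := (infDist_lt_iff ⟨x, frontier_Ksq_subset hx⟩).1 hcon
      obtain ⟨w, hw, hzw⟩ := exists_frontier_near z y hzK hy
      exact absurd (infDist_le_dist_of_mem hw) (by rw [← hd]; linarith)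
    have hm : (1/2 : ℝ) • x + (1/2 : ℝ) • x' ∈ Ksq :=
      convex_Ksq (frontier_Ksq_subset hx) (frontier_Ksq_subset hx')
        (by norm_num) (by norm_num) (by norm_num)
    have h1 : infDist z Ksq ≤ dist z ((1/2 : ℝ) • x + (1/2 : ℝ) • x') :=
      infDist_le_dist_of_mem hm
    have h3 := dist_mid_lt z x x' d hne hdx hdx'
    linarith

private lemma infDist_interior (z : E2) (h0 : z 0 ∈ Set.Ioo (0:ℝ) 1) (h1 : z 1 ∈ Set.Ioo (0:ℝ) 1) :
    infDist z (frontier Ksq) = min (min (z 0) (1 - z 0)) (min (z 1) (1 - z 1)) := by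
  obtain ⟨h01, h02⟩ := h0
  obtain ⟨h11, h12⟩ := h1
  set m := min (min (z 0) (1 - z 0)) (min (z 1) (1 - z 1)) with hm
  have hm1 : m ≤ z 0 := (min_le_left _ _).trans (min_le_left _ _)
  have hm2 : m ≤ 1 - z 0 := (min_le_left _ _).trans (min_le_right _ _)
  have hm3 : m ≤ z 1 := (min_le_right _ _).trans (min_le_left _ _)
  have hm4 : m ≤ 1 - z 1 := (min_le_right _ _).trans (min_le_right _ _)
  have hlow : ∀ w ∈ frontier Ksq, m ≤ dist z w := by
    intro w hw
    rw [frontier_Ksq] at hw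
    obtain ⟨⟨⟨hw01, hw02⟩, hw11, hw12⟩, hcase⟩ := hw
    have c0 := coord0_le_dist z w
    have c1 := coord1_le_dist z w
    rcases hcase with h | h | h | h
    · rw [h] at c0; rw [abs_of_pos (by linarith : (0:ℝ) < z 0 - 0)] at c0; linarith
    · rw [h] at c0; rw [abs_of_neg (by linarith : z 0 - 1 < 0)] at c0; linarith
    · rw [h] at c1; rw [abs_of_pos (by linarith : (0:ℝ) < z 1 - 0)] at c1; linarith
    · rw [h] at c1; rw [abs_of_neg (by linarith : z 1 - 1 < 0)] at c1; linarith
  have hfoot : ∀ a b : ℝ, a ∈ Set.Icc (0:ℝ) 1 → b ∈ Set.Icc (0:ℝ) 1 →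
      (a = 0 ∨ a = 1 ∨ b = 0 ∨ b = 1) → pt a b ∈ frontier Ksq := by
    intro a b ha hb hor
    rw [frontier_Ksq]
    exact ⟨⟨ha, hb⟩, hor⟩
  apply le_antisymm
  · apply le_min
    · apply le_min
      · calc infDist z (frontier Ksq) ≤ dist z (pt 0 (z 1)) :=
            infDist_le_dist_of_mem (hfoot 0 (z 1) (by norm_num)
              ⟨h11.le, h12.le⟩ (Or.inl rfl))
        _ = z 0 := by
            rw [dist_eq2]; simp only [pt_apply0, pt_apply1, sub_self]
            rw [sub_zero]
            simp [Real.sqrt_sq_eq_abs, abs_of_pos h01]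
      · calc infDist z (frontier Ksq) ≤ dist z (pt 1 (z 1)) :=
            infDist_le_dist_of_mem (hfoot 1 (z 1) (by norm_num)
              ⟨h11.le, h12.le⟩ (Or.inr (Or.inl rfl)))
        _ = 1 - z 0 := by
            rw [dist_eq2]; simp only [pt_apply0, pt_apply1, sub_self]
            simp [Real.sqrt_sq_eq_abs, abs_of_neg (by linarith : z 0 - 1 < 0)]
    · apply le_min
      · calc infDist z (frontier Ksq) ≤ dist z (pt (z 0) 0) :=
            infDist_le_dist_of_mem (hfoot (z 0) 0 ⟨h01.le, h02.le⟩
              (by norm_num) (Or.inr (Or.inr (Or.inl rfl))))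
        _ = z 1 := by
            rw [dist_eq2]; simp only [pt_apply0, pt_apply1, sub_self]
            rw [sub_zero]
            simp [Real.sqrt_sq_eq_abs, abs_of_pos h11]
      · calc infDist z (frontier Ksq) ≤ dist z (pt (z 0) 1) :=
            infDist_le_dist_of_mem (hfoot (z 0) 1 ⟨h01.le, h02.le⟩
              (by norm_num) (Or.inr (Or.inr (Or.inr rfl))))
        _ = 1 - z 1 := by
            rw [dist_eq2]; simp only [pt_apply0, pt_apply1, sub_self]
            simp [Real.sqrt_sq_eq_abs, abs_of_neg (by linarith : z 1 - 1 < 0)]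
  · by_contra hcon
    push_neg at hcon
    obtain ⟨y, hy, hdy⟩ := (infDist_lt_iff ⟨pt 0 (z 1),
      hfoot 0 (z 1) (by norm_num) ⟨h11.le, h12.le⟩ (Or.inl rfl)⟩).1 hcon
    exact absurd (hlow y hy) (by linarith)

private lemma pt_ext (w : E2) (a b : ℝ) (h0 : w 0 = a) (h1 : w 1 = b) : w = pt a b := by
  apply PiLp.ext
  intro i
  fin_cases i
  · exact h0
  · exact h1

private lemma resolve (m c other : ℝ) (hm0 : 0 ≤ m) (hmc : m ≤ c)
    (hsq : m ^ 2 = other ^ 2 + c ^ 2) : other = 0 ∧ c = m := by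
  have h1 : m ^ 2 ≤ c ^ 2 := by nlinarith
  have h2 : other ^ 2 = 0 := by nlinarith [sq_nonneg other]
  have h3 : other = 0 := by
    exact pow_eq_zero_iff two_ne_zero |>.mp h2
  have h4 : c ^ 2 = m ^ 2 := by rw [h3] at hsq; linarith [hsq]
  refine ⟨h3, ?_⟩
  calc c = Real.sqrt (c ^ 2) := (Real.sqrt_sq (by linarith)).symm
  _ = Real.sqrt (m ^ 2) := by rw [h4]
  _ = m := Real.sqrt_sq hm0

/-- characterization of nearest points for interior z -/
private lemma nearest_char (z w : E2) (h01 : 0 < z 0) (h02 : z 0 < 1)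
    (h11 : 0 < z 1) (h12 : z 1 < 1) (hw : w ∈ frontier Ksq)
    (hdw : dist z w = min (min (z 0) (1 - z 0)) (min (z 1) (1 - z 1))) :
    (w = pt 0 (z 1) ∧ z 0 = min (min (z 0) (1 - z 0)) (min (z 1) (1 - z 1))) ∨
    (w = pt 1 (z 1) ∧ 1 - z 0 = min (min (z 0) (1 - z 0)) (min (z 1) (1 - z 1))) ∨
    (w = pt (z 0) 0 ∧ z 1 = min (min (z 0) (1 - z 0)) (min (z 1) (1 - z 1))) ∨
    (w = pt (z 0) 1 ∧ 1 - z 1 = min (min (z 0) (1 - z 0)) (min (z 1) (1 - z 1))) := by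
  set m := min (min (z 0) (1 - z 0)) (min (z 1) (1 - z 1)) with hm
  have hm1 : m ≤ z 0 := (min_le_left _ _).trans (min_le_left _ _)
  have hm2 : m ≤ 1 - z 0 := (min_le_left _ _).trans (min_le_right _ _)
  have hm3 : m ≤ z 1 := (min_le_right _ _).trans (min_le_left _ _)
  have hm4 : m ≤ 1 - z 1 := (min_le_right _ _).trans (min_le_right _ _)
  have hm0 : 0 ≤ m := le_min (le_min h01.le (by linarith)) (le_min h11.le (by linarith))
  have hsq : m ^ 2 = (z 0 - w 0) ^ 2 + (z 1 - w 1) ^ 2 := by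
    rw [← hdw, dist_eq2]
    rw [Real.sq_sqrt (by positivity)]
  rw [frontier_Ksq] at hw
  obtain ⟨⟨⟨hw01, hw02⟩, hw11, hw12⟩, hcase⟩ := hw
  rcases hcase with h | h | h | h
  · left
    have hsq' : m ^ 2 = (z 1 - w 1) ^ 2 + (z 0) ^ 2 := by
      rw [h] at hsq; linear_combination hsq
    obtain ⟨e1, e2⟩ := resolve m (z 0) (z 1 - w 1) hm0 hm1 hsq'
    exact ⟨pt_ext w 0 (z 1) h (by linarith), e2.symm ▸ rfl⟩
  · right; left
    have hsq' : m ^ 2 = (z 1 - w 1) ^ 2 + (1 - z 0) ^ 2 := by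
      rw [h] at hsq; linear_combination hsq
    obtain ⟨e1, e2⟩ := resolve m (1 - z 0) (z 1 - w 1) hm0 hm2 hsq'
    exact ⟨pt_ext w 1 (z 1) h (by linarith), e2⟩
  · right; right; left
    have hsq' : m ^ 2 = (z 0 - w 0) ^ 2 + (z 1) ^ 2 := by
      rw [h] at hsq; linear_combination hsq
    obtain ⟨e1, e2⟩ := resolve m (z 1) (z 0 - w 0) hm0 hm3 hsq'
    exact ⟨pt_ext w (z 0) 0 (by linarith) h, e2⟩
  · right; right; right
    have hsq' : m ^ 2 = (z 0 - w 0) ^ 2 + (1 - z 1) ^ 2 := by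
      rw [h] at hsq; linear_combination hsq
    obtain ⟨e1, e2⟩ := resolve m (1 - z 1) (z 0 - w 0) hm0 hm4 hsq'
    exact ⟨pt_ext w (z 0) 1 (by linarith) h, e2⟩

private lemma dist_pt (z : E2) (a b : ℝ) :
    dist z (pt a b) = Real.sqrt ((z 0 - a) ^ 2 + (z 1 - b) ^ 2) := by
  rw [dist_eq2]; simp

private lemma mem_front (a b : ℝ) (ha : 0 ≤ a) (ha' : a ≤ 1) (hb : 0 ≤ b) (hb' : b ≤ 1)
    (h : a = 0 ∨ a = 1 ∨ b = 0 ∨ b = 1) : pt a b ∈ frontier Ksq := by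
  rw [frontier_Ksq]
  refine ⟨⟨⟨?_, ?_⟩, ?_, ?_⟩, ?_⟩ <;> simp only [pt_apply0, pt_apply1] <;> assumption

private lemma sqrt_eq_of (A v : ℝ) (h : 0 ≤ v) (hA : A = v ^ 2) : Real.sqrt A = v := by
  rw [hA]; exact Real.sqrt_sq h

private lemma pt_ne (a b c d : ℝ) (h : a ≠ c) : pt a b ≠ pt c d := by
  intro h'
  exact h (congrArg (fun v : E2 => v 0) h')

/-- The skeleton of the unit square `K = [0,1] × [0,1] ⊆ ℝ²` (the set of points with a
non-unique nearest point on the boundary `∂K`) equals the union of the two open diagonals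
`{(x, x) : 0 < x < 1} ∪ {(x, 1 − x) : 0 < x < 1}`. -/
theorem skeleton_of_unit_square :
    let K : Set (EuclideanSpace ℝ (Fin 2)) :=
      {z | z 0 ∈ Set.Icc (0 : ℝ) 1 ∧ z 1 ∈ Set.Icc (0 : ℝ) 1}
    {z : EuclideanSpace ℝ (Fin 2) |
        ∃ x x' : EuclideanSpace ℝ (Fin 2), x ∈ frontier K ∧ x' ∈ frontier K ∧ x ≠ x' ∧
          dist z x = infDist z (frontier K) ∧ dist z x' = infDist z (frontier K)}
      = {z : EuclideanSpace ℝ (Fin 2) |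
          ∃ t : ℝ, 0 < t ∧ t < 1 ∧
            ((z 0 = t ∧ z 1 = t) ∨ (z 0 = t ∧ z 1 = 1 - t))} := by
  intro K
  have hKK : K = Ksq := rfl
  rw [hKK]
  ext z
  simp only [Set.mem_setOf_eq]
  constructor
  · rintro ⟨x, x', hx, hx', hne, hdx, hdx'⟩
    by_cases hzi : z ∈ interior Ksq
    · rw [interior_Ksq] at hzi
      obtain ⟨⟨h01, h02⟩, h11, h12⟩ := hzi
      have hdm := infDist_interior z ⟨h01, h02⟩ ⟨h11, h12⟩
      have hm1 : min (min (z 0) (1 - z 0)) (min (z 1) (1 - z 1)) ≤ z 0 :=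
        (min_le_left _ _).trans (min_le_left _ _)
      have hm2 : min (min (z 0) (1 - z 0)) (min (z 1) (1 - z 1)) ≤ 1 - z 0 :=
        (min_le_left _ _).trans (min_le_right _ _)
      have hm3 : min (min (z 0) (1 - z 0)) (min (z 1) (1 - z 1)) ≤ z 1 :=
        (min_le_right _ _).trans (min_le_left _ _)
      have hm4 : min (min (z 0) (1 - z 0)) (min (z 1) (1 - z 1)) ≤ 1 - z 1 :=
        (min_le_right _ _).trans (min_le_right _ _)
      have hc1 := nearest_char z x h01 h02 h11 h12 hx (hdx.trans hdm)
      have hc2 := nearest_char z x' h01 h02 h11 h12 hx' (hdx'.trans hdm)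
      rcases hc1 with ⟨hw, hc⟩ | ⟨hw, hc⟩ | ⟨hw, hc⟩ | ⟨hw, hc⟩ <;>
        rcases hc2 with ⟨hw', hc'⟩ | ⟨hw', hc'⟩ | ⟨hw', hc'⟩ | ⟨hw', hc'⟩ <;>
        first
          | exact absurd (hw.trans hw'.symm) hne
          | exact ⟨z 0, h01, h02, Or.inl ⟨rfl, by linarith⟩⟩
          | exact ⟨z 0, h01, h02, Or.inr ⟨rfl, by linarith⟩⟩
          | exact ⟨1/2, by norm_num, by norm_num, Or.inl ⟨by linarith, by linarith⟩⟩
    · exact absurd (no_skel_outside z x x' hzi hx hx' hne hdx hdx') id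
  · rintro ⟨t, ht0, ht1, ⟨hz0, hz1⟩ | ⟨hz0, hz1⟩⟩
    · -- main diagonal
      have hdm := infDist_interior z ⟨by rw [hz0]; exact ht0, by rw [hz0]; exact ht1⟩
        ⟨by rw [hz1]; exact ht0, by rw [hz1]; exact ht1⟩
      rw [hz0, hz1, min_self] at hdm
      by_cases hhalf : t ≤ 1/2
      · have hmt : min t (1 - t) = t := min_eq_left (by linarith)
        rw [hmt] at hdm
        refine ⟨pt 0 t, pt t 0, mem_front 0 t le_rfl (by norm_num) ht0.le ht1.le (Or.inl rfl),
          mem_front t 0 ht0.le ht1.le le_rfl (by norm_num) (Or.inr (Or.inr (Or.inl rfl))),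
          pt_ne 0 t t 0 ht0.ne, ?_, ?_⟩ <;>
        · rw [dist_pt, hdm, hz0, hz1]
          exact sqrt_eq_of _ _ (by linarith) (by ring)
      · push_neg at hhalf
        have hmt : min t (1 - t) = 1 - t := min_eq_right (by linarith)
        rw [hmt] at hdm
        refine ⟨pt 1 t, pt t 1, mem_front 1 t (by norm_num) le_rfl ht0.le ht1.le
            (Or.inr (Or.inl rfl)),
          mem_front t 1 ht0.le ht1.le (by norm_num) le_rfl (Or.inr (Or.inr (Or.inr rfl))),
          pt_ne 1 t t 1 ht1.ne', ?_, ?_⟩ <;>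
        · rw [dist_pt, hdm, hz0, hz1]
          exact sqrt_eq_of _ _ (by linarith) (by ring)
    · -- anti diagonal
      have hdm := infDist_interior z ⟨by rw [hz0]; exact ht0, by rw [hz0]; exact ht1⟩
        ⟨by rw [hz1]; linarith, by rw [hz1]; linarith⟩
      rw [hz0, hz1, show (1 : ℝ) - (1 - t) = t by ring, min_comm (1 - t) t, min_self] at hdm
      by_cases hhalf : t ≤ 1/2
      · have hmt : min t (1 - t) = t := min_eq_left (by linarith)
        rw [hmt] at hdm
        refine ⟨pt 0 (1 - t), pt t 1,
          mem_front 0 (1 - t) le_rfl (by norm_num) (by linarith) (by linarith) (Or.inl rfl),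
          mem_front t 1 ht0.le ht1.le (by norm_num) le_rfl (Or.inr (Or.inr (Or.inr rfl))),
          pt_ne 0 (1 - t) t 1 ht0.ne, ?_, ?_⟩ <;>
        · rw [dist_pt, hdm, hz0, hz1]
          exact sqrt_eq_of _ _ (by linarith) (by ring)
      · push_neg at hhalf
        have hmt : min t (1 - t) = 1 - t := min_eq_right (by linarith)
        rw [hmt] at hdm
        refine ⟨pt 1 (1 - t), pt t 0,
          mem_front 1 (1 - t) (by norm_num) le_rfl (by linarith) (by linarith)
            (Or.inr (Or.inl rfl)),
          mem_front t 0 ht0.le ht1.le le_rfl (by norm_num) (Or.inr (Or.inr (Or.inl rfl))),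
          pt_ne 1 (1 - t) t 0 ht1.ne', ?_, ?_⟩ <;>
        · rw [dist_pt, hdm, hz0, hz1]
          exact sqrt_eq_of _ _ (by linarith) (by ring)

end SqSkelAux
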